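/- Suppose α > 0 and β > 0, and let x : ℝ → ℝ be differentiable at 0 with x(0) = −√(α² + β²) and F(x(ε), ε) = 0 for all ε in some neighborhood of 0. Then the derivative at ε = 0 of the map ε ↦ V_ε″(x(ε)) equals 3·√(α² + β²)·(4α² + 5β²)/β², where V_ε″(x) = 30x⁴ + 12·a·x² + 6·ε·x + 2·c is the second x-derivative of V_ε and √ denotes the real square root. -/

import Mathlib

/-- along a branch `x(ε)` of critical points of the asymmetric
butterfly potential with `x(0) = −√(α²+β²)`, the derivative at `ε = 0` of
`ε ↦ V_ε″(x(ε))`, where `V_ε″(x) = 30x⁴ + 12a·x² + 6εx + 2c`, equals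
`3·√(α²+β²)·(4α² + 5β²)/β²`. -/
theorem stmt13 (α β a c : ℝ) (hα : 0 < α) (hβ : 0 < β)
    (ha : a = -3 * α ^ 2 - (3 / 2) * β ^ 2)
    (hc : c = 3 * α ^ 2 * (α ^ 2 + β ^ 2))
    (F : ℝ → ℝ → ℝ)
    (hF : ∀ x ε : ℝ, F x ε =
      6 * x * (x ^ 2 - α ^ 2) * (x ^ 2 - α ^ 2 - β ^ 2) + 3 * ε * x ^ 2)
    (x : ℝ → ℝ) (hx : DifferentiableAt ℝ x 0)
    (hx0 : x 0 = -Real.sqrt (α ^ 2 + β ^ 2))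
    (hroot : ∀ᶠ ε in nhds (0 : ℝ), F (x ε) ε = 0) :
    deriv (fun ε : ℝ =>
        30 * (x ε) ^ 4 + 12 * a * (x ε) ^ 2 + 6 * ε * (x ε) + 2 * c) 0 =
      3 * Real.sqrt (α ^ 2 + β ^ 2) * (4 * α ^ 2 + 5 * β ^ 2) / β ^ 2 := by
  set s := Real.sqrt (α ^ 2 + β ^ 2) with hs
  have hpos : (0:ℝ) < α ^ 2 + β ^ 2 := by positivity
  have hs2 : s ^ 2 = α ^ 2 + β ^ 2 := Real.sq_sqrt hpos.le
  have hx02 : x 0 ^ 2 = α ^ 2 + β ^ 2 := by rw [hx0]; nlinarith [hs2]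
  set d := deriv x 0 with hd
  have hxd : HasDerivAt x d 0 := hx.hasDerivAt
  -- derivative of ε ↦ F (x ε) ε at 0
  have hG := (((hxd.const_mul (6:ℝ)).mul ((hxd.pow 2).sub_const (α^2))).mul
      (((hxd.pow 2).sub_const (α^2)).sub_const (β^2))).add
      (((hasDerivAt_id (0:ℝ)).const_mul (3:ℝ)).mul (hxd.pow 2))
  simp only [id_eq, Pi.mul_def, Pi.add_def, Pi.pow_apply] at hG
  have hGf : (fun ε : ℝ => 6 * x ε * (x ε ^ 2 - α ^ 2) * (x ε ^ 2 - α ^ 2 - β ^ 2)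
      + 3 * ε * x ε ^ 2) = fun ε : ℝ => F (x ε) ε := by
    funext ε; rw [hF]
  rw [hGf] at hG
  have hzero : deriv (fun ε : ℝ => F (x ε) ε) 0 = 0 := by
    have : (fun ε : ℝ => F (x ε) ε) =ᶠ[nhds (0:ℝ)] fun _ => (0:ℝ) := hroot
    rw [this.deriv_eq]; simp
  have hE := hG.deriv.symm.trans hzero
  push_cast at hE
  norm_num at hE
  have hdval : d = -1 / (4 * β ^ 2) := by
    rw [hx02] at hE
    have h12 : 12 * (α ^ 2 + β ^ 2) * β ^ 2 * d + 3 * (α ^ 2 + β ^ 2) = 0 := by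
      linear_combination hE - 12 * β ^ 2 * d * hx02
    have hβ2 : (4 * β ^ 2 : ℝ) ≠ 0 := by positivity
    field_simp
    nlinarith [h12, hpos]
  have hT := ((((hxd.pow 4).const_mul (30:ℝ)).add ((hxd.pow 2).const_mul (12*a))).add
      (((hasDerivAt_id (0:ℝ)).const_mul (6:ℝ)).mul hxd)).add_const (2*c)
  simp only [id_eq, Pi.mul_def, Pi.add_def, Pi.pow_apply] at hT
  rw [hT.deriv]
  push_cast
  norm_num
  rw [hdval, ha, hx0]
  have hβ2 : (β ^ 2 : ℝ) ≠ 0 := by positivity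
  field_simp
  ring_nf
  linear_combination (120 * s) * hs2
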